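/- Let d ≥ 3, q ∈ [1,∞], G ≥ 0, μ > 0, and let f : ℝ^d → ℝ be convex and G-Lipschitz with respect to the ℓ_q-norm on ℝ^d. Define the smoothed function f^μ(y) = E_{s ~ Unif(𝔹_1^d)}[f(y + μs)], the average of f(y + μs) over s drawn from the uniform probability measure on the unit ℓ_1-ball 𝔹_1^d = {s ∈ ℝ^d : ‖s‖_1 ≤ 1} (i.e., Lebesgue measure restricted to the ball and normalized). Then f^μ is convex, and for every y ∈ ℝ^d, |f^μ(y) − f(y)| ≤ ζ_q(d)·G·μ, where ζ_q(d) = q·d^{1/q}/(d+1) if q ∈ [1, log(d)) and ζ_q(d) = e·log(d)/(d+1) if q ≥ log(d). -/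

import Mathlib

open scoped ENNReal
open MeasureTheory

/-- The ℓ_q norm on `ℝ^d`, for `q ∈ [1, ∞]` (with `‖x‖_∞ = max_i |x i|`). -/
noncomputable def lpnorm {d : ℕ} (q : ℝ≥0∞) (x : Fin d → ℝ) : ℝ :=
  if q = ∞ then ⨆ i, |x i| else (∑ i, |x i| ^ q.toReal) ^ (1 / q.toReal)

/-- The uniform probability measure on the closed unit ℓ₁-ball of `ℝ^d`
(Lebesgue measure restricted to the ball and normalized). -/
noncomputable def unifBall (d : ℕ) : Measure (Fin d → ℝ) :=
  (volume {s : Fin d → ℝ | lpnorm 1 s ≤ 1})⁻¹ •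
    volume.restrict {s : Fin d → ℝ | lpnorm 1 s ≤ 1}

/-- The constant `ζ_q(d)`: `q d^{1/q}/(d+1)` for `q ∈ [1, log d)`,
and `e log(d)/(d+1)` for `q ≥ log d` (including `q = ∞`). -/
noncomputable def zeta (d : ℕ) (q : ℝ≥0∞) : ℝ :=
  if q < ENNReal.ofReal (Real.log d) then q.toReal * (d : ℝ) ^ (1 / q.toReal) / (d + 1)
  else Real.exp 1 * Real.log d / (d + 1)

section AuxiliaryLemmas

open Real Finset intervalIntegral

lemma logProdIneq (d : ℕ) {r : ℝ} (hr : 1 ≤ r) :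
    (d.factorial : ℝ) * (d + 1) ^ r ≤ r ^ r * ∏ k ∈ range d, (r + 1 + k) := by
  have hd1 : (0:ℝ) < (d:ℝ) + 1 := by positivity
  set g : ℝ → ℝ := fun x =>
    x * Real.log x + (∑ k ∈ range d, (Real.log (x + 1 + k) - Real.log (1 + k))) -
      x * Real.log (d + 1) with hg
  have hg1 : g 1 = 0 := by
    have ht : ∑ k ∈ range d, (Real.log ((1:ℝ) + 1 + k) - Real.log (1 + k)) =
        Real.log (1 + (d:ℝ)) := by
      have h := Finset.sum_range_sub (fun k => Real.log (1 + (k:ℝ))) d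
      simp only [Nat.cast_zero, add_zero, Real.log_one, sub_zero] at h
      rw [← h]
      refine Finset.sum_congr rfl fun k _ => ?_
      have hk : (1:ℝ) + ((k:ℕ) + 1 : ℕ) = 1 + 1 + (k:ℝ) := by push_cast; ring
      rw [hk]
    have hgg : g 1 = ∑ k ∈ range d, (Real.log ((1:ℝ) + 1 + k) - Real.log (1 + k)) -
        Real.log ((d:ℝ) + 1) := by simp [hg]
    rw [hgg, ht, add_comm (1:ℝ) (d:ℝ), sub_self]
  have hderiv : ∀ x : ℝ, 0 < x → HasDerivAt g
      (Real.log x + 1 + (∑ k ∈ range d, 1 / (x + 1 + k)) - Real.log (d + 1)) x := by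
    intro x hx0
    have h1 : HasDerivAt (fun x : ℝ => x * Real.log x) (Real.log x + 1) x :=
      Real.hasDerivAt_mul_log hx0.ne'
    have h2 : HasDerivAt (fun x : ℝ => ∑ k ∈ range d,
        (Real.log (x + 1 + k) - Real.log (1 + k))) (∑ k ∈ range d, 1 / (x + 1 + k)) x := by
      refine HasDerivAt.fun_sum fun k _ => ?_
      have hxk : (0:ℝ) < x + 1 + k := by positivity
      have := ((hasDerivAt_id x).add_const ((1:ℝ) + k)).log (by
        simpa [add_assoc] using hxk.ne')
      simpa [add_assoc] using this.sub_const (Real.log (1 + k))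
    have h3 : HasDerivAt (fun x : ℝ => x * Real.log (d + 1)) (Real.log (d + 1)) x := by
      simpa using (hasDerivAt_id x).mul_const (Real.log ((d:ℝ) + 1))
    exact (h1.add h2).sub h3
  have hcont : ContinuousOn g (Set.Ici 1) := fun x hx =>
    ((hderiv x (lt_of_lt_of_le zero_lt_one hx)).continuousAt).continuousWithinAt
  have hmono : MonotoneOn g (Set.Ici 1) := by
    refine monotoneOn_of_deriv_nonneg (convex_Ici 1) hcont (fun x hx => ?_) (fun x hx => ?_)
    · have hx1 : 1 < x := by simpa using hx
      exact ((hderiv x (lt_trans zero_lt_one hx1)).differentiableAt).differentiableWithinAt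
    · have hx1 : 1 < x := by simpa using hx
      have hx0 : (0:ℝ) < x := lt_trans zero_lt_one hx1
      rw [(hderiv x hx0).deriv]
      -- key1 : telescoping bound on the harmonic-type sum
      have key1 : Real.log (x + 1 + d) - Real.log (x + 1) ≤ ∑ k ∈ range d, 1 / (x + 1 + k) := by
        have ht := Finset.sum_range_sub (fun k => Real.log (x + 1 + (k:ℝ))) d
        simp only [Nat.cast_zero, add_zero] at ht
        have hsum : Real.log (x + 1 + d) - Real.log (x + 1) =
            ∑ k ∈ range d, (Real.log (x + 2 + k) - Real.log (x + 1 + k)) := by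
          rw [← ht]
          refine Finset.sum_congr rfl fun k _ => ?_
          have hk : x + 1 + ((k:ℕ) + 1 : ℕ) = x + 2 + (k:ℝ) := by push_cast; ring
          rw [hk]
        rw [hsum]
        refine Finset.sum_le_sum fun k _ => ?_
        have hb : (0:ℝ) < x + 1 + k := by positivity
        have ha : (0:ℝ) < x + 2 + k := by positivity
        have hq : (0:ℝ) < (x + 2 + k) / (x + 1 + k) := by positivity
        have := Real.log_le_sub_one_of_pos hq
        rw [Real.log_div ha.ne' hb.ne'] at this
        have heq : (x + 2 + k) / (x + 1 + k) - 1 = 1 / (x + 1 + k) := by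
          field_simp
          ring
        linarith [heq ▸ this]
      -- key2 : the main elementary estimate
      have key2 : Real.log (x + 1) + Real.log ((d:ℝ) + 1) ≤
          1 + Real.log x + Real.log (x + 1 + d) := by
        have hx1' : (0:ℝ) < x + 1 := by positivity
        have hxd : (0:ℝ) < x + 1 + d := by positivity
        have hprod : (x + 1) * ((d:ℝ) + 1) ≤ Real.exp 1 * (x * (x + 1 + d)) := by
          have he : (2:ℝ) ≤ Real.exp 1 := by
            have := Real.add_one_le_exp (1:ℝ)
            linarith
          have h2 : (x + 1) * ((d:ℝ) + 1) ≤ 2 * (x * (x + 1 + d)) := by nlinarith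
          nlinarith [mul_pos hx0 hxd]
        calc Real.log (x + 1) + Real.log ((d:ℝ) + 1)
            = Real.log ((x + 1) * ((d:ℝ) + 1)) := (Real.log_mul hx1'.ne' hd1.ne').symm
          _ ≤ Real.log (Real.exp 1 * (x * (x + 1 + d))) :=
              Real.log_le_log (by positivity) hprod
          _ = 1 + Real.log (x * (x + 1 + d)) := by
              rw [Real.log_mul (Real.exp_pos 1).ne' (by positivity), Real.log_exp]
          _ = 1 + Real.log x + Real.log (x + 1 + d) := by
              rw [Real.log_mul hx0.ne' hxd.ne']; ring
      linarith
  have h0 : 0 ≤ g r := by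
    have := hmono (Set.self_mem_Ici) (Set.mem_Ici.mpr hr) hr
    linarith [hg1 ▸ this]
  have hr0 : (0:ℝ) < r := lt_of_lt_of_le zero_lt_one hr
  have hsum : ∑ k ∈ range d, Real.log (1 + (k:ℝ)) + r * Real.log ((d:ℝ) + 1) ≤
      r * Real.log r + ∑ k ∈ range d, Real.log (r + 1 + k) := by
    have := h0
    simp only [hg, Finset.sum_sub_distrib] at this
    linarith
  have hexp := Real.exp_le_exp.mpr hsum
  have e1 : Real.exp (∑ k ∈ range d, Real.log (1 + (k:ℝ)) + r * Real.log ((d:ℝ) + 1)) =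
      (d.factorial : ℝ) * ((d:ℝ) + 1) ^ r := by
    rw [Real.exp_add, Real.exp_sum]
    have h1 : ∏ k ∈ range d, Real.exp (Real.log (1 + (k:ℝ))) = (d.factorial : ℝ) := by
      rw [← Finset.prod_range_add_one_eq_factorial d, Nat.cast_prod]
      refine Finset.prod_congr rfl fun k _ => ?_
      rw [Real.exp_log (by positivity)]
      push_cast; ring
    have h2 : Real.exp (r * Real.log ((d:ℝ) + 1)) = ((d:ℝ) + 1) ^ r := by
      rw [Real.rpow_def_of_pos hd1, mul_comm]
    rw [h1, h2]
  have e2 : Real.exp (r * Real.log r + ∑ k ∈ range d, Real.log (r + 1 + k)) =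
      r ^ r * ∏ k ∈ range d, (r + 1 + k) := by
    rw [Real.exp_add, Real.exp_sum]
    have h1 : Real.exp (r * Real.log r) = r ^ r := by
      rw [Real.rpow_def_of_pos hr0, mul_comm]
    rw [h1]
    congr 1
    exact Finset.prod_congr rfl fun k _ => Real.exp_log (by positivity)
  calc (d.factorial : ℝ) * ((d:ℝ) + 1) ^ r = Real.exp _ := e1.symm
    _ ≤ Real.exp _ := hexp
    _ = r ^ r * ∏ k ∈ range d, (r + 1 + k) := e2

lemma betaInt : ∀ (n : ℕ) (r : ℝ), 1 ≤ r →
    (∏ k ∈ range (n + 1), (r + 1 + (k:ℝ))) * ∫ t in (0:ℝ)..1, t ^ r * (1 - t) ^ n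
      = (n.factorial : ℝ) := by
  intro n
  induction n with
  | zero =>
    intro r hr
    have hr1 : r + 1 ≠ 0 := by positivity
    have : ∫ t in (0:ℝ)..1, t ^ r * (1 - t) ^ 0 = 1 / (r + 1) := by
      simp only [pow_zero, mul_one]
      rw [integral_rpow (Or.inl (by linarith : (-1:ℝ) < r))]
      rw [Real.one_rpow, Real.zero_rpow (by positivity : r + 1 ≠ 0)]
      ring
    rw [this]
    simp [hr1]
  | succ n ih =>
    intro r hr
    have hr0 : (0:ℝ) < r := lt_of_lt_of_le zero_lt_one hr
    -- integration by parts
    set u : ℝ → ℝ := fun t => (1 - t) ^ (n + 1) with hu_def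
    set v : ℝ → ℝ := fun t => t ^ (r + 1) with hv_def
    set u' : ℝ → ℝ := fun t => -((n + 1 : ℝ) * (1 - t) ^ n) with hu'_def
    set v' : ℝ → ℝ := fun t => (r + 1) * t ^ r with hv'_def
    have hu : ∀ x ∈ Set.uIcc (0:ℝ) 1, HasDerivAt u (u' x) x := by
      intro x _
      have h := ((hasDerivAt_id x).const_sub 1).fun_pow (n + 1)
      simpa [hu_def, hu'_def, mul_comm] using h
    have hv : ∀ x ∈ Set.uIcc (0:ℝ) 1, HasDerivAt v (v' x) x := by
      intro x _
      have h := Real.hasDerivAt_rpow_const (x := x) (p := r + 1) (Or.inr (by linarith))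
      simpa [hv_def, hv'_def] using h
    have hu' : IntervalIntegrable u' MeasureTheory.volume 0 1 := by
      apply Continuous.intervalIntegrable
      exact (continuous_const.mul ((continuous_const.sub continuous_id).pow n)).neg
    have hv' : IntervalIntegrable v' MeasureTheory.volume 0 1 := by
      apply ContinuousOn.intervalIntegrable
      apply ContinuousOn.mul continuousOn_const
      apply ContinuousOn.rpow_const continuousOn_id
      intro x _
      exact Or.inr hr0.le
    have parts := intervalIntegral.integral_mul_deriv_eq_deriv_mul hu hv hu' hv'
    have hu1 : u 1 = 0 := by simp [hu_def]
    have hv0 : v 0 = 0 := by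
      simp [hv_def, Real.zero_rpow (by positivity : r + 1 ≠ 0)]
    rw [hu1, hv0] at parts
    -- rewrite both sides
    have heq1 : ∫ t in (0:ℝ)..1, u t * v' t
        = (r + 1) * ∫ t in (0:ℝ)..1, t ^ r * (1 - t) ^ (n + 1) := by
      rw [← intervalIntegral.integral_const_mul]
      apply intervalIntegral.integral_congr
      intro x _
      simp [hu_def, hv'_def]; ring
    have heq2 : ∫ t in (0:ℝ)..1, u' t * v t
        = -((n + 1 : ℝ) * ∫ t in (0:ℝ)..1, t ^ (r + 1) * (1 - t) ^ n) := by
      rw [← intervalIntegral.integral_const_mul, ← intervalIntegral.integral_neg]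
      apply intervalIntegral.integral_congr
      intro x _
      simp [hu'_def, hv_def]; ring
    rw [heq1, heq2] at parts
    -- parts : (r+1) * I (n+1) r = 0 * 1 - 0 - -((n+1) * I n (r+1))
    have key : (r + 1) * (∫ t in (0:ℝ)..1, t ^ r * (1 - t) ^ (n + 1))
        = (n + 1 : ℝ) * ∫ t in (0:ℝ)..1, t ^ (r + 1) * (1 - t) ^ n := by
      rw [parts]; ring
    have ihr := ih (r + 1) (by linarith)
    -- product manipulation
    have hprod : ∏ k ∈ range (n + 2), (r + 1 + (k:ℝ))
        = (∏ k ∈ range (n + 1), ((r + 1) + 1 + (k:ℝ))) * (r + 1) := by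
      rw [Finset.prod_range_succ' (fun k => (r + 1 + (k:ℝ))) (n + 1)]
      congr 1
      · refine Finset.prod_congr rfl fun k _ => ?_
        push_cast; ring
      · norm_num
    rw [hprod]
    rw [mul_assoc, key]
    have : (∏ k ∈ range (n + 1), (r + 1 + 1 + (k:ℝ))) *
        ((n + 1 : ℝ) * ∫ t in (0:ℝ)..1, t ^ (r + 1) * (1 - t) ^ n)
        = (n + 1 : ℝ) * ((∏ k ∈ range (n + 1), (r + 1 + 1 + (k:ℝ))) *
          ∫ t in (0:ℝ)..1, t ^ (r + 1) * (1 - t) ^ n) := by ring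
    rw [this, ihr]
    push_cast [Nat.factorial_succ]
    ring

lemma volume_l1ball (m : ℕ) [Nonempty (Fin m)] (c : ℝ) :
    volume {w : Fin m → ℝ | ∑ i, |w i| ≤ c} =
      ENNReal.ofReal c ^ m * ENNReal.ofReal (2 ^ m / m.factorial) := by
  have h := MeasureTheory.volume_sum_rpow_le (ι := Fin m) (p := 1) le_rfl c
  have hset : {x : Fin m → ℝ | (∑ i, |x i| ^ (1:ℝ)) ^ ((1:ℝ)/1) ≤ c}
      = {w : Fin m → ℝ | ∑ i, |w i| ≤ c} := by
    ext w; simp [Real.rpow_one]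
  rw [hset] at h
  rw [h]
  congr 1
  · simp
  · congr 1
    rw [show (1:ℝ)/1 + 1 = 2 by norm_num, Real.Gamma_two]
    rw [show ((Fintype.card (Fin m) : ℝ)/1 + 1) = ((m:ℕ):ℝ) + 1 by simp]
    rw [Real.Gamma_nat_eq_factorial]
    simp

lemma measurableSet_l1ball (m : ℕ) (c : ℝ) :
    MeasurableSet {w : Fin m → ℝ | ∑ i, |w i| ≤ c} := by
  have : Continuous fun w : Fin m → ℝ => ∑ i, |w i| :=
    continuous_finset_sum _ fun i _ => (continuous_apply i).abs
  exact measurableSet_le this.measurable measurable_const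

lemma ofReal_max_zero (a : ℝ) : ENNReal.ofReal a = ENNReal.ofReal (max a 0) := by
  rcases le_total 0 a with h | h
  · rw [max_eq_left h]
  · rw [max_eq_right h, ENNReal.ofReal_of_nonpos h, ENNReal.ofReal_zero]

lemma slice_lintegral (m : ℕ) (hm : 1 ≤ m) (i : Fin (m + 1)) {r : ℝ} (hr : 1 ≤ r) :
    ∫⁻ s in {s : Fin (m + 1) → ℝ | ∑ j, |s j| ≤ 1}, ENNReal.ofReal (|s i| ^ r) ∂volume
      = ENNReal.ofReal ((2 ^ (m + 1) / m.factorial) *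
          ∫ t in (0:ℝ)..1, t ^ r * (1 - t) ^ m) := by
  haveI : Nonempty (Fin m) := ⟨⟨0, hm⟩⟩
  have hr0 : (0:ℝ) < r := lt_of_lt_of_le zero_lt_one hr
  set B : Set (Fin (m + 1) → ℝ) := {s | ∑ j, |s j| ≤ 1} with hB
  set e := MeasurableEquiv.piFinSuccAbove (fun _ : Fin (m + 1) => ℝ) i with he
  have hmp : MeasurePreserving e volume volume :=
    MeasureTheory.volume_preserving_piFinSuccAbove (fun _ : Fin (m + 1) => ℝ) i
  set G : ℝ × (Fin m → ℝ) → ℝ≥0∞ := fun p =>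
    Set.indicator {p : ℝ × (Fin m → ℝ) | |p.1| + ∑ j, |p.2 j| ≤ 1}
      (fun p => ENNReal.ofReal (|p.1| ^ r)) p with hG
  have hGmeas : Measurable G := by
    apply Measurable.indicator
    · exact (measurable_fst.abs.pow_const r).ennreal_ofReal
    · have : Continuous fun p : ℝ × (Fin m → ℝ) => |p.1| + ∑ j, |p.2 j| :=
        (continuous_fst.abs).add
          (continuous_finset_sum _ fun j _ => ((continuous_apply j).comp continuous_snd).abs)
      exact measurableSet_le this.measurable measurable_const
  have hGa : ∀ (a : ℝ) (w : Fin m → ℝ), G (a, w) =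
      if |a| + ∑ j, |w j| ≤ 1 then ENNReal.ofReal (|a| ^ r) else 0 := by
    intro a w
    simp only [hG, Set.indicator_apply, Set.mem_setOf_eq]
  have hcomp : ∀ s : Fin (m + 1) → ℝ, B.indicator (fun s => ENNReal.ofReal (|s i| ^ r)) s
      = G (e s) := by
    intro s
    have hsum : ∑ j, |s j| = |s i| + ∑ j : Fin m, |s (i.succAbove j)| :=
      Fin.sum_univ_succAbove (fun j => |s j|) i
    have hes : e s = (s i, fun j => s (i.succAbove j)) := rfl
    rw [hes, hGa (s i) (fun j => s (i.succAbove j)), Set.indicator_apply]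
    simp only [hB, Set.mem_setOf_eq, hsum]
  have step1 : ∫⁻ s in B, ENNReal.ofReal (|s i| ^ r) ∂volume = ∫⁻ p, G p ∂volume := by
    rw [← lintegral_indicator (measurableSet_l1ball (m+1) 1)]
    calc ∫⁻ s, B.indicator (fun s => ENNReal.ofReal (|s i| ^ r)) s ∂volume
        = ∫⁻ s, G (e s) ∂volume := by
          apply lintegral_congr; exact hcomp
      _ = ∫⁻ p, G p ∂volume := hmp.lintegral_comp hGmeas
  rw [step1]
  rw [Measure.volume_eq_prod, MeasureTheory.lintegral_prod _ hGmeas.aemeasurable]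
  -- inner integral
  have inner : ∀ t : ℝ, (∫⁻ w, G (t, w) ∂volume) =
      ENNReal.ofReal (|t| ^ r) * (ENNReal.ofReal (1 - |t|) ^ m *
        ENNReal.ofReal (2 ^ m / m.factorial)) := by
    intro t
    have hGset : ∀ w : Fin m → ℝ, G (t, w) =
        Set.indicator {w : Fin m → ℝ | ∑ j, |w j| ≤ 1 - |t|}
          (fun _ => ENNReal.ofReal (|t| ^ r)) w := by
      intro w
      have hind : Set.indicator {w : Fin m → ℝ | ∑ j, |w j| ≤ 1 - |t|}
          (fun _ => ENNReal.ofReal (|t| ^ r)) w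
          = if ∑ j, |w j| ≤ 1 - |t| then ENNReal.ofReal (|t| ^ r) else 0 := by
        simp only [Set.indicator_apply, Set.mem_setOf_eq]
      rw [hind, hGa t w]
      by_cases hw : ∑ j, |w j| ≤ 1 - |t|
      · rw [if_pos hw, if_pos (by linarith)]
      · rw [if_neg hw, if_neg (fun h => hw (by linarith))]
    calc (∫⁻ w, G (t, w) ∂volume)
        = ∫⁻ w, Set.indicator {w : Fin m → ℝ | ∑ j, |w j| ≤ 1 - |t|}
            (fun _ => ENNReal.ofReal (|t| ^ r)) w ∂volume := lintegral_congr hGset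
      _ = ENNReal.ofReal (|t| ^ r) * volume {w : Fin m → ℝ | ∑ j, |w j| ≤ 1 - |t|} := by
          rw [← lintegral_indicator_const (measurableSet_l1ball m (1 - |t|))]
      _ = ENNReal.ofReal (|t| ^ r) * (ENNReal.ofReal (1 - |t|) ^ m *
            ENNReal.ofReal (2 ^ m / m.factorial)) := by rw [volume_l1ball]
  simp_rw [inner]
  -- outer integral
  set φ : ℝ → ℝ := fun t => |t| ^ r * max (1 - |t|) 0 ^ m * (2 ^ m / m.factorial) with hφ
  have hφnn : ∀ t, 0 ≤ φ t := by
    intro t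
    apply mul_nonneg (mul_nonneg (Real.rpow_nonneg (abs_nonneg t) r) _) (by positivity)
    positivity
  have hpt : ∀ t : ℝ, ENNReal.ofReal (|t| ^ r) * (ENNReal.ofReal (1 - |t|) ^ m *
      ENNReal.ofReal (2 ^ m / m.factorial)) = ENNReal.ofReal (φ t) := by
    intro t
    rw [ofReal_max_zero (1 - |t|), ← ENNReal.ofReal_pow (le_max_right _ _),
      ← ENNReal.ofReal_mul (by positivity : (0:ℝ) ≤ ((1 - |t|) ⊔ 0) ^ m),
      ← ENNReal.ofReal_mul (Real.rpow_nonneg (abs_nonneg t) r), hφ]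
    congr 1
    ring
  simp_rw [hpt]
  have hφcont : Continuous φ := by
    apply Continuous.mul
    apply Continuous.mul
    · exact continuous_abs.rpow_const fun x => Or.inr hr0.le
    · exact ((continuous_const.sub continuous_abs).max continuous_const).pow m
    · exact continuous_const
  have hφsupp : HasCompactSupport φ := by
    apply HasCompactSupport.intro (isCompact_Icc (a := (-1:ℝ)) (b := 1))
    intro x hx
    have : 1 < |x| := by
      rcases not_and_or.mp hx with h | h <;> [skip; skip] <;>
        · simp only [Set.mem_Icc, not_and_or, not_le] at hx
          rcases hx with h | h
          · rw [abs_of_neg (by linarith)]; linarith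
          · rw [abs_of_pos (by linarith)]; linarith
    have hmax : max (1 - |x|) 0 = 0 := max_eq_right (by linarith)
    rw [hφ]
    simp only [hmax]
    rw [zero_pow (by omega : m ≠ 0)]
    ring
  have hφint : Integrable φ := hφcont.integrable_of_hasCompactSupport hφsupp
  rw [← MeasureTheory.ofReal_integral_eq_lintegral_ofReal hφint
    (Filter.Eventually.of_forall hφnn)]
  congr 1
  -- compute the real integral of φ
  have hsplit : ∫ t, φ t = (∫ t, |t| ^ r * max (1 - |t|) 0 ^ m) * (2 ^ m / m.factorial) := by
    rw [hφ, ← MeasureTheory.integral_mul_const]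
  rw [hsplit]
  have habs : (∫ t, |t| ^ r * max (1 - |t|) 0 ^ m)
      = 2 * ∫ t in Set.Ioi (0:ℝ), t ^ r * max (1 - t) 0 ^ m := by
    exact integral_comp_abs (f := fun x => x ^ r * max (1 - x) 0 ^ m)
  rw [habs]
  have hioi : ∫ t in Set.Ioi (0:ℝ), t ^ r * max (1 - t) 0 ^ m
      = ∫ t in (0:ℝ)..1, t ^ r * (1 - t) ^ m := by
    rw [← Set.Ioc_union_Ioi_eq_Ioi (zero_le_one (α := ℝ))]
    have hcont2 : Continuous fun t : ℝ => t ^ r * max (1 - t) 0 ^ m := by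
      apply Continuous.mul
      · exact continuous_id.rpow_const fun x => Or.inr hr0.le
      · exact ((continuous_const.sub continuous_id).max continuous_const).pow m
    rw [MeasureTheory.setIntegral_union (Set.Ioc_disjoint_Ioi le_rfl) measurableSet_Ioi
      (((hcont2.continuousOn.integrableOn_compact
        (isCompact_Icc (a := (0:ℝ)) (b := 1)))).mono_set Set.Ioc_subset_Icc_self)
      ?_]
    · have h2 : ∫ t in Set.Ioi (1:ℝ), t ^ r * max (1 - t) 0 ^ m = 0 := by
        rw [MeasureTheory.setIntegral_congr_fun measurableSet_Ioi
          (g := fun _ => (0:ℝ)) ?_]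
        · simp
        · intro x hx
          have : max (1 - x) 0 = 0 := max_eq_right (by simp only [Set.mem_Ioi] at hx; linarith)
          simp [this, zero_pow (by omega : m ≠ 0)]
      rw [h2, add_zero]
      rw [intervalIntegral.integral_of_le zero_le_one]
      apply MeasureTheory.setIntegral_congr_fun measurableSet_Ioc
      intro x hx
      simp only [Set.mem_Ioc] at hx
      show x ^ r * ((1 - x) ⊔ 0) ^ m = x ^ r * (1 - x) ^ m
      rw [max_eq_left (by linarith : (0:ℝ) ≤ 1 - x)]
    · apply MeasureTheory.IntegrableOn.congr_fun (f := fun _ => (0:ℝ))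
      · exact integrableOn_zero
      · intro x hx
        have : max (1 - x) 0 = 0 := max_eq_right (by simp only [Set.mem_Ioi] at hx; linarith)
        simp [this, zero_pow (by omega : m ≠ 0)]
      · exact measurableSet_Ioi
  rw [hioi]
  push_cast
  ring

-- § basic facts about lpnorm and the ball
lemma lpnorm_one_eq {d : ℕ} (s : Fin d → ℝ) : lpnorm 1 s = ∑ i, |s i| := by
  rw [lpnorm, if_neg (by simp : (1:ℝ≥0∞) ≠ ∞)]
  simp [Real.rpow_one]

lemma l1ball_set_eq (d : ℕ) :
    {s : Fin d → ℝ | lpnorm 1 s ≤ 1} = {s : Fin d → ℝ | ∑ i, |s i| ≤ 1} := by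
  ext s; simp [lpnorm_one_eq]

lemma volume_ball_eq (d : ℕ) (hd : 1 ≤ d) :
    volume {s : Fin d → ℝ | lpnorm 1 s ≤ 1} = ENNReal.ofReal (2 ^ d / d.factorial) := by
  haveI : Nonempty (Fin d) := ⟨⟨0, hd⟩⟩
  rw [l1ball_set_eq, volume_l1ball d 1]
  simp

lemma isCompact_ball (d : ℕ) : IsCompact {s : Fin d → ℝ | ∑ i, |s i| ≤ 1} := by
  rw [Metric.isCompact_iff_isClosed_bounded]
  constructor
  · have : Continuous fun w : Fin d → ℝ => ∑ i, |w i| :=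
      continuous_finset_sum _ fun i _ => (continuous_apply i).abs
    exact isClosed_le this continuous_const
  · rw [isBounded_iff_forall_norm_le]
    refine ⟨1, fun s hs => ?_⟩
    rw [pi_norm_le_iff_of_nonneg zero_le_one]
    intro i
    calc ‖s i‖ = |s i| := rfl
      _ ≤ ∑ j, |s j| := Finset.single_le_sum (f := fun j => |s j|)
            (fun j _ => abs_nonneg _) (Finset.mem_univ i)
      _ ≤ 1 := hs

instance unifBall_prob (d : ℕ) [NeZero d] : IsProbabilityMeasure (unifBall d) := by
  constructor
  have hd : 1 ≤ d := Nat.one_le_iff_ne_zero.mpr (NeZero.ne d)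
  rw [unifBall, Measure.smul_apply, Measure.restrict_apply MeasurableSet.univ, Set.univ_inter,
    volume_ball_eq d hd, smul_eq_mul]
  rw [ENNReal.inv_mul_cancel]
  · simp only [ne_eq, ENNReal.ofReal_eq_zero, not_le]
    positivity
  · exact ENNReal.ofReal_ne_top

lemma integrable_unifBall {d : ℕ} (hd : 1 ≤ d) {g : (Fin d → ℝ) → ℝ} (hg : Continuous g) :
    Integrable g (unifBall d) := by
  rw [unifBall]
  apply Integrable.smul_measure
  · rw [l1ball_set_eq]
    exact hg.continuousOn.integrableOn_compact (isCompact_ball d)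
  · simp only [ne_eq, ENNReal.inv_eq_top, volume_ball_eq d hd, ENNReal.ofReal_eq_zero, not_le]
    positivity

-- § per-coordinate moment
lemma coord_moment (d : ℕ) (hd : 3 ≤ d) (i : Fin d) {r : ℝ} (hr : 1 ≤ r) :
    ∫⁻ s, ENNReal.ofReal (|s i| ^ r) ∂(unifBall d) ≤ ENNReal.ofReal ((r / (d + 1)) ^ r) := by
  obtain ⟨m, rfl⟩ : ∃ m, d = m + 1 := ⟨d - 1, by omega⟩
  have hm : 1 ≤ m := by omega
  have hr0 : (0:ℝ) < r := lt_of_lt_of_le zero_lt_one hr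
  have hI := betaInt m r hr
  set I : ℝ := ∫ t in (0:ℝ)..1, t ^ r * (1 - t) ^ m with hIdef
  have hprodpos : (0:ℝ) < ∏ k ∈ range (m + 1), (r + 1 + (k:ℝ)) :=
    Finset.prod_pos fun k _ => by positivity
  have hInn : 0 ≤ I := by
    have : I = (m.factorial : ℝ) / ∏ k ∈ range (m + 1), (r + 1 + (k:ℝ)) := by
      field_simp at hI ⊢
      linarith [hI]
    rw [this]; positivity
  have hIeq : I = (m.factorial : ℝ) / ∏ k ∈ range (m + 1), (r + 1 + (k:ℝ)) := by
    rw [eq_div_iff hprodpos.ne']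
    linarith [hI]
  have hIle : ((m:ℝ) + 1) * I ≤ (r / ((m:ℝ) + 1 + 1)) ^ r := by
    have hP := logProdIneq (m + 1) hr
    push_cast at hP
    have hfac : (((m+1).factorial : ℕ) : ℝ) = ((m:ℝ) + 1) * m.factorial := by
      rw [Nat.factorial_succ]; push_cast; ring
    have h1 : ((m:ℝ) + 1) * I = (((m+1).factorial : ℕ) : ℝ) /
        ∏ k ∈ range (m + 1), (r + 1 + (k:ℝ)) := by
      rw [hIeq, hfac]; ring
    rw [h1, Real.div_rpow hr0.le (by positivity),
      div_le_div_iff₀ hprodpos (by positivity)]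
    push_cast
    nlinarith [hP]
  rw [unifBall, volume_ball_eq (m+1) (by omega), lintegral_smul_measure, l1ball_set_eq,
    slice_lintegral m hm i hr]
  rw [← ENNReal.ofReal_inv_of_pos (by positivity : (0:ℝ) < 2 ^ (m+1) / (m+1).factorial),
    smul_eq_mul, ← ENNReal.ofReal_mul (by positivity)]
  apply ENNReal.ofReal_le_ofReal
  have hconst : ((2:ℝ) ^ (m+1) / (m+1).factorial)⁻¹ * (2 ^ (m+1) / m.factorial * I)
      = ((m:ℝ) + 1) * I := by
    rw [Nat.factorial_succ]
    push_cast
    have h2 : (0:ℝ) < 2 ^ (m+1) := by positivity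
    have h3 : (0:ℝ) < (m.factorial : ℝ) := by positivity
    field_simp
  rw [hconst]
  push_cast
  exact hIle

-- § Jensen / Hölder step
lemma exp_norm_bound (d : ℕ) (hd : 3 ≤ d) {r : ℝ} (hr : 1 ≤ r) :
    ∫⁻ s, ENNReal.ofReal ((∑ i, |s i| ^ r) ^ (1 / r)) ∂(unifBall d)
      ≤ ENNReal.ofReal (r * (d:ℝ) ^ (1 / r) / (d + 1)) := by
  haveI : NeZero d := ⟨by omega⟩
  have hr0 : (0:ℝ) < r := lt_of_lt_of_le zero_lt_one hr
  set P := unifBall d with hP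
  set F : (Fin d → ℝ) → ℝ≥0∞ := fun s => ENNReal.ofReal ((∑ i, |s i| ^ r) ^ (1 / r)) with hF
  have hsumnn : ∀ s : Fin d → ℝ, (0:ℝ) ≤ ∑ i, |s i| ^ r := fun s =>
    Finset.sum_nonneg fun i _ => Real.rpow_nonneg (abs_nonneg _) r
  have hFmeas : Measurable F := by
    apply Measurable.ennreal_ofReal
    apply Continuous.measurable
    apply Continuous.rpow_const
    · exact continuous_finset_sum _ fun i _ =>
        (continuous_apply i).abs.rpow_const fun x => Or.inr hr0.le
    · exact fun x => Or.inr (by positivity)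
  have hFr : ∀ s, F s ^ r = ENNReal.ofReal (∑ i, |s i| ^ r) := by
    intro s
    rw [hF, ENNReal.ofReal_rpow_of_nonneg (Real.rpow_nonneg (hsumnn s) _) hr0.le,
      ← Real.rpow_mul (hsumnn s), one_div, inv_mul_cancel₀ hr0.ne', Real.rpow_one]
  have hA : ∫⁻ s, F s ∂P ≤ (∫⁻ s, F s ^ r ∂P) ^ (1 / r) := by
    rcases eq_or_lt_of_le hr with h1 | h1
    · rw [← h1]
      simp [ENNReal.rpow_one]
    · have hpq : Real.HolderConjugate r (r / (r - 1)) := Real.HolderConjugate.conjExponent h1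
      calc ∫⁻ s, F s ∂P = ∫⁻ s, (fun a => F a * (fun _ => (1:ℝ≥0∞)) a) s ∂P := by simp
        _ ≤ (∫⁻ s, F s ^ r ∂P) ^ (1 / r) *
            (∫⁻ s, (1:ℝ≥0∞) ^ (r / (r - 1)) ∂P) ^ (1 / (r / (r - 1))) :=
          ENNReal.lintegral_mul_le_Lp_mul_Lq P hpq hFmeas.aemeasurable aemeasurable_const
        _ = (∫⁻ s, F s ^ r ∂P) ^ (1 / r) := by
          simp [ENNReal.one_rpow, lintegral_one, measure_univ]
  have hC : ∫⁻ s, F s ^ r ∂P = ∑ i, ∫⁻ s, ENNReal.ofReal (|s i| ^ r) ∂P := by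
    simp_rw [hFr]
    calc ∫⁻ s, ENNReal.ofReal (∑ i, |s i| ^ r) ∂P
        = ∫⁻ s, ∑ i, ENNReal.ofReal (|s i| ^ r) ∂P := by
          apply lintegral_congr
          intro s
          rw [ENNReal.ofReal_sum_of_nonneg (fun i _ => Real.rpow_nonneg (abs_nonneg _) r)]
      _ = ∑ i, ∫⁻ s, ENNReal.ofReal (|s i| ^ r) ∂P :=
          lintegral_finset_sum _ fun i _ =>
            (((continuous_apply i).abs.rpow_const fun x =>
              Or.inr hr0.le).measurable).ennreal_ofReal
  have hD : (∑ i : Fin d, ∫⁻ s, ENNReal.ofReal (|s i| ^ r) ∂P)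
      ≤ (d : ℝ≥0∞) * ENNReal.ofReal ((r / (d + 1)) ^ r) := by
    calc (∑ i : Fin d, ∫⁻ s, ENNReal.ofReal (|s i| ^ r) ∂P)
        ≤ ∑ _i : Fin d, ENNReal.ofReal ((r / (d + 1)) ^ r) :=
          Finset.sum_le_sum fun i _ => coord_moment d hd i hr
      _ = (d : ℝ≥0∞) * ENNReal.ofReal ((r / (d + 1)) ^ r) := by
          rw [Finset.sum_const, Finset.card_univ, Fintype.card_fin, nsmul_eq_mul]
  have hE : ((d : ℝ≥0∞) * ENNReal.ofReal ((r / (d + 1)) ^ r)) ^ (1 / r)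
      = ENNReal.ofReal (r * (d:ℝ) ^ (1 / r) / (d + 1)) := by
    have hdd : (d : ℝ≥0∞) = ENNReal.ofReal (d : ℝ) := by
      rw [ENNReal.ofReal_natCast]
    rw [hdd, ← ENNReal.ofReal_mul (by positivity),
      ENNReal.ofReal_rpow_of_nonneg (by positivity) (by positivity)]
    congr 1
    rw [Real.mul_rpow (by positivity) (by positivity)]
    have hback : (((r / ((d:ℝ) + 1)) ^ r) ^ (1 / r)) = r / ((d:ℝ) + 1) := by
      rw [← Real.rpow_mul (by positivity), mul_one_div, div_self hr0.ne', Real.rpow_one]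
    rw [hback]
    ring
  calc ∫⁻ s, F s ∂P ≤ (∫⁻ s, F s ^ r ∂P) ^ (1 / r) := hA
    _ ≤ ((d : ℝ≥0∞) * ENNReal.ofReal ((r / (d + 1)) ^ r)) ^ (1 / r) := by
        apply ENNReal.rpow_le_rpow _ (by positivity)
        rw [hC]; exact hD
    _ = ENNReal.ofReal (r * (d:ℝ) ^ (1 / r) / (d + 1)) := hE

lemma exp_norm_bound_real (d : ℕ) (hd : 3 ≤ d) {r : ℝ} (hr : 1 ≤ r) :
    ∫ s, (∑ i, |s i| ^ r) ^ (1 / r) ∂(unifBall d) ≤ r * (d:ℝ) ^ (1 / r) / (d + 1) := by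
  have hr0 : (0:ℝ) < r := lt_of_lt_of_le zero_lt_one hr
  have hcont : Continuous fun s : Fin d → ℝ => (∑ i, |s i| ^ r) ^ (1 / r) := by
    apply Continuous.rpow_const
    · exact continuous_finset_sum _ fun i _ =>
        (continuous_apply i).abs.rpow_const fun x => Or.inr hr0.le
    · exact fun x => Or.inr (by positivity)
  have hnn : (0:(Fin d → ℝ) → ℝ) ≤ᵐ[unifBall d]
      fun s => (∑ i, |s i| ^ r) ^ (1 / r) :=
    Filter.Eventually.of_forall fun s => Real.rpow_nonneg
      (Finset.sum_nonneg fun i _ => Real.rpow_nonneg (abs_nonneg _) r) _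
  rw [MeasureTheory.integral_eq_lintegral_of_nonneg_ae hnn
    hcont.measurable.aestronglyMeasurable]
  have hb := exp_norm_bound d hd hr
  have := ENNReal.toReal_mono ENNReal.ofReal_ne_top hb
  rwa [ENNReal.toReal_ofReal (by positivity)] at this


-- § lpnorm facts
lemma coord_le_normR {d : ℕ} {r : ℝ} (hr : 1 ≤ r) (s : Fin d → ℝ) (i : Fin d) :
    |s i| ≤ (∑ j, |s j| ^ r) ^ (1 / r) := by
  have hr0 : (0:ℝ) < r := lt_of_lt_of_le zero_lt_one hr
  have h1 : |s i| = (|s i| ^ r) ^ (1 / r) := by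
    rw [← Real.rpow_mul (abs_nonneg _), mul_one_div, div_self hr0.ne', Real.rpow_one]
  rw [h1]
  apply Real.rpow_le_rpow (Real.rpow_nonneg (abs_nonneg _) r) _ (by positivity)
  exact Finset.single_le_sum (f := fun j => |s j| ^ r)
    (fun j _ => Real.rpow_nonneg (abs_nonneg _) r) (Finset.mem_univ i)

lemma sup_le_normR {d : ℕ} (hd : 1 ≤ d) {r : ℝ} (hr : 1 ≤ r) (s : Fin d → ℝ) :
    (⨆ i, |s i|) ≤ (∑ j, |s j| ^ r) ^ (1 / r) := by
  haveI : Nonempty (Fin d) := ⟨⟨0, hd⟩⟩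
  exact ciSup_le fun i => coord_le_normR hr s i

lemma normR_mono {d : ℕ} {a b : ℝ} (ha : 1 ≤ a) (hab : a ≤ b) (s : Fin d → ℝ) :
    (∑ i, |s i| ^ b) ^ (1 / b) ≤ (∑ i, |s i| ^ a) ^ (1 / a) := by
  have ha0 : (0:ℝ) < a := lt_of_lt_of_le zero_lt_one ha
  have hb0 : (0:ℝ) < b := lt_of_lt_of_le ha0 hab
  set S : ℝ := (∑ i, |s i| ^ a) ^ (1 / a) with hS
  have hSnn : 0 ≤ S := Real.rpow_nonneg (Finset.sum_nonneg fun i _ =>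
    Real.rpow_nonneg (abs_nonneg _) a) _
  have hSa : S ^ a = ∑ i, |s i| ^ a := by
    rw [hS, ← Real.rpow_mul (Finset.sum_nonneg fun i _ => Real.rpow_nonneg (abs_nonneg _) a),
      one_div, inv_mul_cancel₀ ha0.ne', Real.rpow_one]
  have hle : ∀ i, |s i| ≤ S := fun i => coord_le_normR ha s i
  rcases eq_or_lt_of_le hSnn with h0 | h0
  · -- S = 0, so all coordinates vanish
    have hz : ∀ i, |s i| = 0 := fun i => le_antisymm (h0 ▸ hle i) (abs_nonneg _)
    have : ∑ i, |s i| ^ b = 0 := Finset.sum_eq_zero fun i _ => by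
      rw [hz i, Real.zero_rpow hb0.ne']
    rw [this, Real.zero_rpow (by positivity : 1 / b ≠ 0), ← h0]
  · have key : ∑ i, |s i| ^ b ≤ S ^ b := by
      have hstep : ∀ i : Fin d, |s i| ^ b ≤ |s i| ^ a * S ^ (b - a) := by
        intro i
        rcases eq_or_lt_of_le (abs_nonneg (s i)) with hz | hp
        · rw [← hz, Real.zero_rpow hb0.ne', Real.zero_rpow ha0.ne', zero_mul]
        · have h1 : |s i| ^ b = |s i| ^ a * |s i| ^ (b - a) := by
            rw [← Real.rpow_add hp]; ring_nf
          rw [h1]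
          exact mul_le_mul_of_nonneg_left
            (Real.rpow_le_rpow (abs_nonneg _) (hle i) (by linarith))
            (Real.rpow_nonneg (abs_nonneg _) a)
      calc ∑ i, |s i| ^ b ≤ ∑ i, |s i| ^ a * S ^ (b - a) :=
            Finset.sum_le_sum fun i _ => hstep i
        _ = (∑ i, |s i| ^ a) * S ^ (b - a) := by rw [← Finset.sum_mul]
        _ = S ^ a * S ^ (b - a) := by rw [hSa]
        _ = S ^ b := by rw [← Real.rpow_add h0]; ring_nf
    calc (∑ i, |s i| ^ b) ^ (1 / b) ≤ (S ^ b) ^ (1 / b) :=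
          Real.rpow_le_rpow (Finset.sum_nonneg fun i _ =>
            Real.rpow_nonneg (abs_nonneg _) b) key (by positivity)
      _ = S := by
          rw [← Real.rpow_mul hSnn, mul_one_div, div_self hb0.ne', Real.rpow_one]

lemma lpnorm_smul {d : ℕ} (hd : 1 ≤ d) (q : ℝ≥0∞) (hq : 1 ≤ q) {c : ℝ} (hc : 0 ≤ c)
    (s : Fin d → ℝ) : lpnorm q (c • s) = c * lpnorm q s := by
  haveI : Nonempty (Fin d) := ⟨⟨0, hd⟩⟩
  by_cases hqi : q = ∞
  · rw [lpnorm, lpnorm, if_pos hqi, if_pos hqi]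
    have habs : ∀ i, |(c • s) i| = c * |s i| := fun i => by
      simp [abs_mul, abs_of_nonneg hc]
    simp_rw [habs]
    exact (Real.mul_iSup_of_nonneg hc fun i => |s i|).symm
  · have hr : 1 ≤ q.toReal := by
      have := ENNReal.toReal_mono hqi hq
      simpa using this
    have hr0 : (0:ℝ) < q.toReal := lt_of_lt_of_le zero_lt_one hr
    rw [lpnorm, lpnorm, if_neg hqi, if_neg hqi]
    have habs : ∀ i, |(c • s) i| ^ q.toReal = c ^ q.toReal * |s i| ^ q.toReal := fun i => by
      rw [Pi.smul_apply, smul_eq_mul, abs_mul, abs_of_nonneg hc,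
        Real.mul_rpow hc (abs_nonneg _)]
    simp_rw [habs]
    rw [← Finset.mul_sum, Real.mul_rpow (by positivity)
      (Finset.sum_nonneg fun i _ => Real.rpow_nonneg (abs_nonneg _) _),
      ← Real.rpow_mul hc, mul_one_div, div_self hr0.ne', Real.rpow_one]


end AuxiliaryLemmas

theorem stmt_16 (d : ℕ) (hd : 3 ≤ d) (q : ℝ≥0∞) (hq : 1 ≤ q)
    (G μ : ℝ) (hG : 0 ≤ G) (hμ : 0 < μ)
    (f : (Fin d → ℝ) → ℝ) (hconv : ConvexOn ℝ Set.univ f)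
    (hlip : ∀ x z : Fin d → ℝ, |f x - f z| ≤ G * lpnorm q (x - z)) :
    ConvexOn ℝ Set.univ (fun y : Fin d → ℝ => ∫ s, f (y + μ • s) ∂(unifBall d)) ∧
    ∀ y : Fin d → ℝ,
      |(∫ s, f (y + μ • s) ∂(unifBall d)) - f y| ≤ zeta d q * G * μ := by
  haveI : NeZero d := ⟨by omega⟩
  have hd1 : 1 ≤ d := by omega
  set P := unifBall d with hPdef
  have hcontf : Continuous f := by
    exact continuousOn_univ.mp (hconv.continuousOn isOpen_univ)
  have hint : ∀ y : Fin d → ℝ, Integrable (fun s => f (y + μ • s)) P :=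
    fun y => integrable_unifBall hd1
      (hcontf.comp (continuous_const.add (continuous_id.const_smul μ)))
  constructor
  · refine ⟨convex_univ, fun x _ y _ a b ha hb hab => ?_⟩
    have hptwise : ∀ s : Fin d → ℝ,
        f (a • x + b • y + μ • s) ≤ a * f (x + μ • s) + b * f (y + μ • s) := by
      intro s
      have hcomb : a • x + b • y + μ • s = a • (x + μ • s) + b • (y + μ • s) := by
        have h2 : a • (x + μ • s) + b • (y + μ • s)
            = a • x + b • y + (a + b) • (μ • s) := by
          rw [smul_add, smul_add, add_smul]
          abel
        rw [h2, hab, one_smul]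
      rw [hcomb]
      exact hconv.2 (Set.mem_univ _) (Set.mem_univ _) ha hb hab
    calc (fun y => ∫ s, f (y + μ • s) ∂P) (a • x + b • y)
        = ∫ s, f (a • x + b • y + μ • s) ∂P := rfl
      _ ≤ ∫ s, (a * f (x + μ • s) + b * f (y + μ • s)) ∂P := by
          apply integral_mono (hint _) _ hptwise
          exact ((hint x).const_mul a).add ((hint y).const_mul b)
      _ = a * ∫ s, f (x + μ • s) ∂P + b * ∫ s, f (y + μ • s) ∂P := by
          rw [integral_add ((hint x).const_mul a) ((hint y).const_mul b),
            integral_const_mul, integral_const_mul]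
      _ = a • (fun y => ∫ s, f (y + μ • s) ∂P) x + b • (fun y => ∫ s, f (y + μ • s) ∂P) y := rfl
  · -- the quantitative bound
    obtain ⟨r, hr1, hql, hzeq⟩ : ∃ r : ℝ, 1 ≤ r ∧
        (∀ s : Fin d → ℝ, lpnorm q s ≤ (∑ i, |s i| ^ r) ^ (1 / r)) ∧
        zeta d q = r * (d:ℝ) ^ (1 / r) / ((d:ℝ) + 1) := by
      have hlog1 : 1 ≤ Real.log d := by
        have h3 : Real.exp 1 ≤ 3 := by
          have := Real.exp_one_lt_d9
          linarith
        have : (1:ℝ) ≤ Real.log 3 := by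
          rw [Real.le_log_iff_exp_le (by norm_num)]
          exact h3
        calc (1:ℝ) ≤ Real.log 3 := this
          _ ≤ Real.log d := Real.log_le_log (by norm_num) (by exact_mod_cast hd)
      by_cases hqlog : q < ENNReal.ofReal (Real.log d)
      · have hqfin : q ≠ ∞ := ne_top_of_lt hqlog
        refine ⟨q.toReal, ?_, ?_, ?_⟩
        · have := ENNReal.toReal_mono hqfin hq
          simpa using this
        · intro s
          rw [lpnorm, if_neg hqfin]
        · rw [zeta, if_pos hqlog]
      · refine ⟨Real.log d, hlog1, ?_, ?_⟩
        · intro s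
          by_cases hqi : q = ∞
          · rw [lpnorm, if_pos hqi]
            exact sup_le_normR hd1 hlog1 s
          · rw [lpnorm, if_neg hqi]
            have hge : Real.log d ≤ q.toReal := by
              have h1 := ENNReal.toReal_mono hqi (not_lt.mp hqlog)
              rwa [ENNReal.toReal_ofReal (by linarith)] at h1
            exact normR_mono hlog1 hge s
        · rw [zeta, if_neg hqlog]
          have hde : (d:ℝ) ^ (1 / Real.log d) = Real.exp 1 := by
            rw [Real.rpow_def_of_pos (by positivity : (0:ℝ) < (d:ℝ)), mul_one_div,
              div_self (by linarith : Real.log d ≠ 0)]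
          rw [hde]
          ring
    intro y
    set N : (Fin d → ℝ) → ℝ := fun s => (∑ i, |s i| ^ r) ^ (1 / r) with hN
    have hr0 : (0:ℝ) < r := lt_of_lt_of_le zero_lt_one hr1
    have hNcont : Continuous N := by
      apply Continuous.rpow_const
      · exact continuous_finset_sum _ fun i _ =>
          (continuous_apply i).abs.rpow_const fun x => Or.inr hr0.le
      · exact fun x => Or.inr (by positivity)
    have hNint : Integrable N P := integrable_unifBall hd1 hNcont
    have key : ∀ s : Fin d → ℝ, |f (y + μ • s) - f y| ≤ (G * μ) * N s := by
      intro s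
      calc |f (y + μ • s) - f y| ≤ G * lpnorm q (y + μ • s - y) := hlip _ _
        _ = G * lpnorm q (μ • s) := by rw [add_sub_cancel_left]
        _ = G * (μ * lpnorm q s) := by rw [lpnorm_smul hd1 q hq hμ.le]
        _ ≤ (G * μ) * N s := by
            rw [← mul_assoc]
            exact mul_le_mul_of_nonneg_left (hql s) (by positivity)
    have hsub : ∫ s, (f (y + μ • s) - f y) ∂P = (∫ s, f (y + μ • s) ∂P) - f y := by
      rw [integral_sub (hint y) (integrable_const _), integral_const]
      simp [measure_univ]
    calc |(∫ s, f (y + μ • s) ∂P) - f y|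
        = |∫ s, (f (y + μ • s) - f y) ∂P| := by rw [hsub]
      _ ≤ ∫ s, |f (y + μ • s) - f y| ∂P := by
          have h := norm_integral_le_integral_norm (μ := P) (fun s => f (y + μ • s) - f y)
          simpa [Real.norm_eq_abs] using h
      _ ≤ ∫ s, (G * μ) * N s ∂P := by
          apply integral_mono ((hint y).sub (integrable_const _)).abs
            (hNint.const_mul _) key
      _ = (G * μ) * ∫ s, N s ∂P := integral_const_mul _ _
      _ ≤ (G * μ) * (r * (d:ℝ) ^ (1 / r) / ((d:ℝ) + 1)) :=
          mul_le_mul_of_nonneg_left (exp_norm_bound_real d hd hr1) (by positivity)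
      _ = zeta d q * G * μ := by rw [hzeq]; ring
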